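/- Let x_1,...,x_n be a set of n vectors in R^d in c-isotropic position (Σ_i c_i x_i ⊗ x_i = I_d with all c_i > 0), and suppose R^d = F_1 ⊕ F_2 is a direct sum such that every x_i lies in F_1 ∪ F_2. Then F_1 and F_2 are orthogonal subspaces. -/

import Mathlib

open Matrix

lemma aux_sum_mulVec {d n : ℕ} (M : Fin n → Matrix (Fin d) (Fin d) ℝ) (w : Fin d → ℝ) :
    (∑ i, M i) *ᵥ w = ∑ i, M i *ᵥ w := by
  induction (Finset.univ : Finset (Fin n)) using Finset.induction_on with
  | empty => simp [Matrix.zero_mulVec]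
  | insert _ _ h ih => simp [Finset.sum_insert h, Matrix.add_mulVec, ih]

lemma aux_vecMulVec_mulVec {d : ℕ} (a b w : Fin d → ℝ) :
    Matrix.vecMulVec a b *ᵥ w = (b ⬝ᵥ w) • a := by
  funext i
  simp [Matrix.mulVec, dotProduct, Matrix.vecMulVec_apply, Finset.mul_sum,
    mul_comm, mul_assoc, mul_left_comm]

/-- If `x 1, ..., x n` are in `c`-isotropic position with positive weights, and
`ℝ^d = F₁ ⊕ F₂` is a direct sum such that every `x i` lies in `F₁ ∪ F₂`, then `F₁`
and `F₂` are orthogonal. -/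
theorem stmt9 {d n : ℕ} (x : Fin n → Fin d → ℝ) (c : Fin n → ℝ)
    (hc : ∀ i, 0 < c i)
    (F₁ F₂ : Submodule ℝ (Fin d → ℝ))
    (hdisj : F₁ ⊓ F₂ = ⊥) (hsup : F₁ ⊔ F₂ = ⊤)
    (hx : ∀ i, x i ∈ F₁ ∨ x i ∈ F₂)
    (hiso : ∑ i, c i • Matrix.vecMulVec (x i) (x i) = (1 : Matrix (Fin d) (Fin d) ℝ)) :
    ∀ u ∈ F₁, ∀ v ∈ F₂, u ⬝ᵥ v = 0 := by
  classical
  intro u hu v hv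
  set S₁ : Matrix (Fin d) (Fin d) ℝ :=
    ∑ i, if x i ∈ F₁ then c i • Matrix.vecMulVec (x i) (x i) else 0 with hS₁
  set S₂ : Matrix (Fin d) (Fin d) ℝ :=
    ∑ i, if x i ∈ F₁ then 0 else c i • Matrix.vecMulVec (x i) (x i) with hS₂
  have hsum : S₁ + S₂ = 1 := by
    rw [hS₁, hS₂, ← Finset.sum_add_distrib, ← hiso]
    refine Finset.sum_congr rfl fun i _ => ?_
    by_cases h : x i ∈ F₁ <;> simp [h]
  have hmem1 : ∀ w, S₁ *ᵥ w ∈ F₁ := by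
    intro w
    rw [hS₁, aux_sum_mulVec]
    refine Submodule.sum_mem _ fun i _ => ?_
    by_cases h : x i ∈ F₁
    · simp only [h, if_true, Matrix.smul_mulVec, aux_vecMulVec_mulVec]
      exact Submodule.smul_mem _ _ (Submodule.smul_mem _ _ h)
    · simp [h]
  have hmem2 : ∀ w, S₂ *ᵥ w ∈ F₂ := by
    intro w
    rw [hS₂, aux_sum_mulVec]
    refine Submodule.sum_mem _ fun i _ => ?_
    by_cases h : x i ∈ F₁
    · simp [h]
    · simp only [h, if_false, Matrix.smul_mulVec, aux_vecMulVec_mulVec]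
      exact Submodule.smul_mem _ _ (Submodule.smul_mem _ _ ((hx i).resolve_left h))
  have hid : ∀ w : Fin d → ℝ, S₁ *ᵥ w + S₂ *ᵥ w = w := by
    intro w
    rw [← Matrix.add_mulVec, hsum, Matrix.one_mulVec]
  -- S₂ *ᵥ u = 0
  have h2u : S₂ *ᵥ u = 0 := by
    have h1 : S₂ *ᵥ u ∈ F₁ := by
      have : S₂ *ᵥ u = u - S₁ *ᵥ u := by
        rw [eq_sub_iff_add_eq, add_comm]; exact hid u
      rw [this]
      exact Submodule.sub_mem _ hu (hmem1 u)
    have : S₂ *ᵥ u ∈ F₁ ⊓ F₂ := ⟨h1, hmem2 u⟩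
    rw [hdisj] at this
    simpa using this
  have h1v : S₁ *ᵥ v = 0 := by
    have h1 : S₁ *ᵥ v ∈ F₂ := by
      have : S₁ *ᵥ v = v - S₂ *ᵥ v := by
        rw [eq_sub_iff_add_eq]; exact hid v
      rw [this]
      exact Submodule.sub_mem _ hv (hmem2 v)
    have : S₁ *ᵥ v ∈ F₁ ⊓ F₂ := ⟨hmem1 v, h1⟩
    rw [hdisj] at this
    simpa using this
  have hsymm : S₂ᵀ = S₂ := by
    rw [hS₂, Matrix.transpose_sum]
    refine Finset.sum_congr rfl fun i _ => ?_
    have key : ∀ a : Fin d → ℝ, (Matrix.vecMulVec a a)ᵀ = Matrix.vecMulVec a a := by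
      intro a; ext i j; simp [Matrix.vecMulVec_apply, mul_comm]
    by_cases h : x i ∈ F₁ <;> simp [h, Matrix.transpose_smul, key]
  calc u ⬝ᵥ v = u ⬝ᵥ (S₁ *ᵥ v + S₂ *ᵥ v) := by rw [hid]
    _ = u ⬝ᵥ (S₂ *ᵥ v) := by rw [h1v]; simp
    _ = (S₂ *ᵥ u) ⬝ᵥ v := by
        rw [Matrix.dotProduct_mulVec, ← Matrix.mulVec_transpose, hsymm]
    _ = 0 := by rw [h2u]; simp
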